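/- Let ψ ∈ ℂ⁸ be the three-qubit state with computational-basis coordinates (ordered |000⟩,…,|111⟩) equal to (1/2)·(1, (1+i)/2, (1+i)/2, (1−i)/2, (1+i)/2, (1−i)/2, (1−i)/2, 0). Then the squared pairwise concurrences of ψ are all equal: C²_{AB}(ψ) = C²_{AC}(ψ) = C²_{BC}(ψ) = (13 − √65)/32. -/

import Mathlib

open Matrix Complex Kronecker

noncomputable section

def Y2 : Matrix (Fin 2) (Fin 2) ℂ := !![0, -Complex.I; Complex.I, 0]

/-- Binary index `(i,j,k) ↦ 4i + 2j + k`. -/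
def idx3 (p : Fin 2 × Fin 2 × Fin 2) : Fin 8 :=
  ⟨4 * p.1.val + 2 * p.2.1.val + p.2.2.val, by
    have := p.1.isLt; have := p.2.1.isLt; have := p.2.2.isLt; omega⟩

/-- The state `(1/2)(1, (1+i)/2, (1+i)/2, (1−i)/2, (1+i)/2, (1−i)/2, (1−i)/2, 0)` on
qubits `A, B, C`. -/
def ψ13 : Fin 2 × Fin 2 × Fin 2 → ℂ := fun p => (1 / 2 : ℂ) *
  (![1, (1 + I) / 2, (1 + I) / 2, (1 - I) / 2,
     (1 + I) / 2, (1 - I) / 2, (1 - I) / 2, 0] : Fin 8 → ℂ) (idx3 p)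

/-- `ρ_AB = Tr_C |ψ⟩⟨ψ|`. -/
def ρAB : Matrix (Fin 2 × Fin 2) (Fin 2 × Fin 2) ℂ := fun p q =>
  ∑ z : Fin 2, ψ13 (p.1, p.2, z) * star (ψ13 (q.1, q.2, z))

/-- `ρ_AC = Tr_B |ψ⟩⟨ψ|`. -/
def ρAC : Matrix (Fin 2 × Fin 2) (Fin 2 × Fin 2) ℂ := fun p q =>
  ∑ y : Fin 2, ψ13 (p.1, y, p.2) * star (ψ13 (q.1, y, q.2))

/-- `ρ_BC = Tr_A |ψ⟩⟨ψ|`. -/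
def ρBC : Matrix (Fin 2 × Fin 2) (Fin 2 × Fin 2) ℂ := fun p q =>
  ∑ x : Fin 2, ψ13 (x, p.1, p.2) * star (ψ13 (x, q.1, q.2))

/-- The spin-flipped matrix `ρ̃ = (Y⊗Y) ρ̄ (Y⊗Y)`. -/
def spinFlip (ρ : Matrix (Fin 2 × Fin 2) (Fin 2 × Fin 2) ℂ) :
    Matrix (Fin 2 × Fin 2) (Fin 2 × Fin 2) ℂ :=
  (Y2 ⊗ₖ Y2) * ρ.map (starRingEnd ℂ) * (Y2 ⊗ₖ Y2)

/-- "The squared concurrence of the two-qubit density matrix `ρ` is `c`": there are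
nonnegative reals `λ₁ ≥ λ₂ ≥ λ₃ ≥ λ₄` which are the eigenvalues of `ρρ̃` (stated via
the characteristic polynomial) with `max(0, √λ₁ − √λ₂ − √λ₃ − √λ₄)² = c`. -/
def concurrenceSqIs (ρ : Matrix (Fin 2 × Fin 2) (Fin 2 × Fin 2) ℂ) (c : ℝ) : Prop :=
  ∃ lam : Fin 4 → ℝ, Antitone lam ∧ (∀ i, 0 ≤ lam i) ∧
    (ρ * spinFlip ρ).charpoly =
      ∏ i : Fin 4, (Polynomial.X - Polynomial.C ((lam i : ℝ) : ℂ)) ∧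
    (max 0 (Real.sqrt (lam 0) - Real.sqrt (lam 1) - Real.sqrt (lam 2) -
      Real.sqrt (lam 3))) ^ 2 = c

/-! ### Auxiliary material for the proof -/

open Polynomial in
lemma aux_true : True := trivial

def e4 : Fin 2 × Fin 2 ≃ Fin 4 where
  toFun p := ⟨2 * p.1.val + p.2.val, by have := p.1.isLt; have := p.2.isLt; omega⟩
  invFun i := (⟨i.val / 2, by omega⟩, ⟨i.val % 2, by omega⟩)
  left_inv p := by
    have := p.1.isLt; have := p.2.isLt
    ext <;> simp <;> omega
  right_inv i := by ext; simp; omega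

lemma e00 : e4 (0,0) = 0 := rfl
lemma e01 : e4 (0,1) = 1 := rfl
lemma e10 : e4 (1,0) = 2 := rfl
lemma e11 : e4 (1,1) = 3 := rfl

def R4 : Matrix (Fin 4) (Fin 4) ℂ :=
  !![3/8, 1/8, 1/8, 1/8 + 1/8*I;
     1/8, 1/4, 1/4, 1/8*I;
     1/8, 1/4, 1/4, 1/8*I;
     1/8 - 1/8*I, -(1/8)*I, -(1/8)*I, 1/8]

def K4 : Matrix (Fin 4) (Fin 4) ℂ :=
  !![0,0,0,-1; 0,0,1,0; 0,1,0,0; -1,0,0,0]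

def Rt4 : Matrix (Fin 4) (Fin 4) ℂ :=
  !![1/8, -(1/8)*I, -(1/8)*I, 1/8 + 1/8*I;
     1/8*I, 1/4, 1/4, -(1/8);
     1/8*I, 1/4, 1/4, -(1/8);
     1/8 - 1/8*I, -(1/8), -(1/8), 3/8]

def M4 : Matrix (Fin 4) (Fin 4) ℂ :=
  !![5/64 + 1/32*I, 3/64 - 1/16*I, 3/64 - 1/16*I, 1/16 + 3/32*I;
     1/32 + 5/64*I, 1/8 - 1/32*I, 1/8 - 1/32*I, -(3/64) + 1/16*I;
     1/32 + 5/64*I, 1/8 - 1/32*I, 1/8 - 1/32*I, -(3/64) + 1/16*I;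
     1/16 - 1/32*I, -(1/32) - 5/64*I, -(1/32) - 5/64*I, 5/64 + 1/32*I]

def lift4 (A : Matrix (Fin 4) (Fin 4) ℂ) : Matrix (Fin 2 × Fin 2) (Fin 2 × Fin 2) ℂ :=
  Matrix.of fun p q => A (e4 p) (e4 q)

lemma lift4_mul (A B : Matrix (Fin 4) (Fin 4) ℂ) : lift4 A * lift4 B = lift4 (A * B) := by
  ext p q
  simp only [lift4, Matrix.mul_apply, Matrix.of_apply]
  exact Fintype.sum_equiv e4 _ _ fun r => rfl

lemma lift4_map (A : Matrix (Fin 4) (Fin 4) ℂ) (f : ℂ → ℂ) :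
    (lift4 A).map f = lift4 (A.map f) := rfl

lemma lift4_reindex (A : Matrix (Fin 4) (Fin 4) ℂ) :
    lift4 A = Matrix.reindex e4.symm e4.symm A := rfl

lemma lift4_charpoly (A : Matrix (Fin 4) (Fin 4) ℂ) :
    (lift4 A).charpoly = A.charpoly := by
  rw [lift4_reindex, Matrix.charpoly_reindex]

set_option maxHeartbeats 2000000 in
lemma kron_eq : Y2 ⊗ₖ Y2 = lift4 K4 := by
  ext ⟨a, b⟩ ⟨c, d⟩
  fin_cases a <;> fin_cases b <;> fin_cases c <;> fin_cases d <;>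
    simp only [lift4, Matrix.of_apply, Fin.mk_zero, Fin.mk_one, e00, e01, e10, e11,
      Matrix.kroneckerMap_apply, Y2, K4, Matrix.cons_val_zero, Matrix.cons_val_one,
      Matrix.head_cons, Matrix.cons_val_two, Matrix.cons_val_three, Matrix.tail_cons] <;>
    norm_num [Complex.ext_iff]

set_option maxHeartbeats 2000000 in
lemma rhoAB_eq : ρAB = lift4 R4 := by
  ext ⟨a, b⟩ ⟨c, d⟩
  fin_cases a <;> fin_cases b <;> fin_cases c <;> fin_cases d <;>
    simp only [ρAB, ψ13, idx3, lift4, R4, Matrix.of_apply, Fin.mk_zero, Fin.mk_one,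
      e00, e01, e10, e11, Fin.sum_univ_two,
      Matrix.cons_val_zero, Matrix.cons_val_one, Matrix.head_cons, Matrix.head_fin_const,
      Matrix.cons_val_two, Matrix.cons_val_three, Matrix.tail_cons] <;>
    norm_num [Complex.ext_iff]

set_option maxHeartbeats 2000000 in
lemma rhoAC_eq : ρAC = lift4 R4 := by
  ext ⟨a, b⟩ ⟨c, d⟩
  fin_cases a <;> fin_cases b <;> fin_cases c <;> fin_cases d <;>
    simp only [ρAC, ψ13, idx3, lift4, R4, Matrix.of_apply, Fin.mk_zero, Fin.mk_one,
      e00, e01, e10, e11, Fin.sum_univ_two,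
      Matrix.cons_val_zero, Matrix.cons_val_one, Matrix.head_cons, Matrix.head_fin_const,
      Matrix.cons_val_two, Matrix.cons_val_three, Matrix.tail_cons] <;>
    norm_num [Complex.ext_iff]

set_option maxHeartbeats 2000000 in
lemma rhoBC_eq : ρBC = lift4 R4 := by
  ext ⟨a, b⟩ ⟨c, d⟩
  fin_cases a <;> fin_cases b <;> fin_cases c <;> fin_cases d <;>
    simp only [ρBC, ψ13, idx3, lift4, R4, Matrix.of_apply, Fin.mk_zero, Fin.mk_one,
      e00, e01, e10, e11, Fin.sum_univ_two,
      Matrix.cons_val_zero, Matrix.cons_val_one, Matrix.head_cons, Matrix.head_fin_const,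
      Matrix.cons_val_two, Matrix.cons_val_three, Matrix.tail_cons] <;>
    norm_num [Complex.ext_iff]

set_option maxHeartbeats 2000000 in
lemma step1 : K4 * R4.map (starRingEnd ℂ) * K4 = Rt4 := by
  ext i j
  fin_cases i <;> fin_cases j <;>
    simp only [K4, R4, Rt4, Matrix.mul_apply, Matrix.map_apply, Fin.sum_univ_four,
      Fin.mk_zero, Fin.mk_one, Matrix.cons_val_zero, Matrix.cons_val_one, Matrix.head_cons,
      Matrix.cons_val_two, Matrix.cons_val_three, Matrix.tail_cons, Fin.isValue,
      Matrix.of_apply, Fin.reduceFinMk] <;>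
    norm_num [Complex.ext_iff, Matrix.vecHead, Matrix.vecTail, Function.comp,
      map_div₀, map_ofNat]

set_option maxHeartbeats 2000000 in
lemma step2 : R4 * Rt4 = M4 := by
  ext i j
  fin_cases i <;> fin_cases j <;>
    simp only [K4, R4, Rt4, M4, Matrix.mul_apply, Matrix.map_apply, Fin.sum_univ_four,
      Fin.mk_zero, Fin.mk_one, Matrix.cons_val_zero, Matrix.cons_val_one, Matrix.head_cons,
      Matrix.cons_val_two, Matrix.cons_val_three, Matrix.tail_cons, Fin.isValue,
      Matrix.of_apply, Fin.reduceFinMk] <;>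
    norm_num [Complex.ext_iff, Matrix.vecHead, Matrix.vecTail, Function.comp,
      map_div₀, map_ofNat]

open Polynomial in
set_option maxRecDepth 10000 in
set_option maxHeartbeats 2000000 in
lemma step3 : M4.charpoly = X^4 - C (13/32) * X^3 + C (65/4096) * X^2 := by
  apply Polynomial.funext
  intro x
  rw [Matrix.charpoly, ← Polynomial.coe_evalRingHom, RingHom.map_det]
  have hmap : (Polynomial.evalRingHom x).mapMatrix M4.charmatrix =
      !![x - (5/64 + 1/32*I), -(3/64 - 1/16*I), -(3/64 - 1/16*I), -(1/16 + 3/32*I);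
         -(1/32 + 5/64*I), x - (1/8 - 1/32*I), -(1/8 - 1/32*I), -(-(3/64) + 1/16*I);
         -(1/32 + 5/64*I), -(1/8 - 1/32*I), x - (1/8 - 1/32*I), -(-(3/64) + 1/16*I);
         -(1/16 - 1/32*I), -(-(1/32) - 5/64*I), -(-(1/32) - 5/64*I), x - (5/64 + 1/32*I)] := by
    ext i j
    fin_cases i <;> fin_cases j <;>
      simp [Matrix.charmatrix_apply, M4, Matrix.diagonal_apply, Fin.mk_zero, Fin.mk_one]
  rw [hmap]
  simp only [Polynomial.coe_evalRingHom, Polynomial.eval_add, Polynomial.eval_sub,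
    Polynomial.eval_mul, Polynomial.eval_pow, Polynomial.eval_X, Polynomial.eval_C]
  simp [Matrix.det_succ_row_zero, Fin.sum_univ_succ, Fin.succAbove_zero, Fin.succ_succAbove_zero, Fin.succ_succAbove_succ, Fin.succ_succAbove_one, Fin.one_succAbove_zero, Fin.one_succAbove_one,
    show Fin.succAbove (1 : Fin 4) (2 : Fin 3) = 3 from rfl, show Fin.succAbove (2 : Fin 4) (2 : Fin 3) = 3 from rfl,
    show Fin.succAbove (3 : Fin 4) (2 : Fin 3) = 2 from rfl, Matrix.of_apply, Matrix.cons_val, Fin.reduceFinMk]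
  ring_nf
  linear_combination ((5/16384:ℂ)*x + (35/65536:ℂ)*x*Complex.I + (5/256:ℂ)*x^2) * Complex.I_sq

lemma prod_eq (ρ : Matrix (Fin 2 × Fin 2) (Fin 2 × Fin 2) ℂ) (h : ρ = lift4 R4) :
    ρ * spinFlip ρ = lift4 M4 := by
  rw [h, spinFlip, kron_eq, lift4_map, lift4_mul, lift4_mul, lift4_mul, step1, step2]

open Polynomial in
lemma conc_of (ρ : Matrix (Fin 2 × Fin 2) (Fin 2 × Fin 2) ℂ) (h : ρ = lift4 R4) :
    concurrenceSqIs ρ ((13 - Real.sqrt 65) / 32) := by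
  have h26 : Real.sqrt 26 ^ 2 = 26 := Real.sq_sqrt (by norm_num)
  have h26' : (0:ℝ) ≤ Real.sqrt 26 := Real.sqrt_nonneg 26
  set l0 : ℝ := (13 + 2 * Real.sqrt 26) / 64 with hl0
  set l1 : ℝ := (13 - 2 * Real.sqrt 26) / 64 with hl1
  have hle : l1 ≤ l0 := by rw [hl0, hl1]; nlinarith
  have h1nn : 0 ≤ l1 := by rw [hl1]; nlinarith
  have h0nn : 0 ≤ l0 := by rw [hl0]; nlinarith
  refine ⟨![l0, l1, 0, 0], ?_, ?_, ?_, ?_⟩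
  · intro i j hij
    fin_cases i <;> fin_cases j <;>
      simp_all [Fin.le_def] <;> first | omega | linarith
  · intro i
    fin_cases i <;> simp_all
  · rw [prod_eq ρ h, lift4_charpoly, step3, Fin.prod_univ_four]
    simp only [Matrix.cons_val_zero, Matrix.cons_val_one, Matrix.head_cons,
      Matrix.cons_val_two, Matrix.cons_val_three, Matrix.tail_cons,
      Complex.ofReal_zero, map_zero, sub_zero]
    have hs : ((l0:ℂ)) + ((l1:ℂ)) = 13/32 := by
      rw [hl0, hl1]; push_cast; ring
    have hsq : ((Real.sqrt 26 : ℝ) : ℂ)^2 = 26 := by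
      rw [← Complex.ofReal_pow, h26]; norm_num
    have hp : ((l0:ℂ)) * ((l1:ℂ)) = 65/4096 := by
      rw [hl0, hl1]; push_cast
      linear_combination (-1/1024 : ℂ) * hsq
    have hsC : C ((l0:ℂ)) + C ((l1:ℂ)) = C ((13/32 : ℂ)) := by rw [← _root_.map_add, hs]
    have hpC : C ((l0:ℂ)) * C ((l1:ℂ)) = C ((65/4096 : ℂ)) := by rw [← _root_.map_mul, hp]
    linear_combination (X:ℂ[X])^3 * hsC - (X:ℂ[X])^2 * hpC
  · have hmax : Real.sqrt l1 ≤ Real.sqrt l0 := Real.sqrt_le_sqrt hle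
    have hsl0 : Real.sqrt l0 ^ 2 = l0 := Real.sq_sqrt h0nn
    have hsl1 : Real.sqrt l1 ^ 2 = l1 := Real.sq_sqrt h1nn
    have hprod : Real.sqrt l0 * Real.sqrt l1 = Real.sqrt 65 / 64 := by
      rw [← Real.sqrt_mul h0nn]
      rw [show l0 * l1 = (Real.sqrt 65 / 64)^2 by
        have h65 : Real.sqrt 65 ^ 2 = 65 := Real.sq_sqrt (by norm_num)
        rw [hl0, hl1]; field_simp; nlinarith]
      exact Real.sqrt_sq (by positivity)
    simp only [Matrix.cons_val_zero, Matrix.cons_val_one, Matrix.head_cons,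
      Matrix.cons_val_two, Matrix.cons_val_three, Matrix.tail_cons,
      Real.sqrt_zero, sub_zero]
    rw [max_eq_right (by linarith)]
    have : (Real.sqrt l0 - Real.sqrt l1)^2 = l0 + l1 - 2 * (Real.sqrt l0 * Real.sqrt l1) := by
      rw [sub_sq, hsl0, hsl1]; ring
    rw [this, hprod, hl0, hl1]
    ring

/-- All squared pairwise concurrences of `ψ13` equal `(13 − √65)/32`. -/
theorem EJM_fiducial_pairwise_concurrences :
    concurrenceSqIs ρAB ((13 - Real.sqrt 65) / 32) ∧
    concurrenceSqIs ρAC ((13 - Real.sqrt 65) / 32) ∧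
    concurrenceSqIs ρBC ((13 - Real.sqrt 65) / 32) := by
  exact ⟨conc_of ρAB rhoAB_eq, conc_of ρAC rhoAC_eq, conc_of ρBC rhoBC_eq⟩

end
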